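/- Let X: Ω → ℤ₊ be a random variable with binomial moments S_j := E[C(X,j)]. Suppose S_l < ∞ and 2d+k+1 ≤ l for d ∈ ℤ₊, k ∈ ℕ. Then Σ_{j=0}^{2d+1} (-1)^j C(j+k-1, k-1) S_{j+k} ≤ Pr(X ≥ k), and if 2r+k ≤ l then Pr(X ≥ k) ≤ Σ_{j=0}^{2r} (-1)^j C(j+k-1, k-1) S_{j+k}. -/

import Mathlib

open MeasureTheory Filter ENNReal

noncomputable def binomMoment {Ω : Type*} [MeasurableSpace Ω] (μ : Measure Ω) (X : Ω → ℕ)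
    (j : ℕ) : ℝ≥0∞ :=
  ∫⁻ ω, ((X ω).choose j : ℝ≥0∞) ∂μ

section Aux

lemma lemA (d k : ℕ) : ∑ i ∈ Finset.range k, (d + i).choose (i + 1) + 1 = (d + k).choose k := by
  induction k with
  | zero => simp
  | succ k ih =>
    rw [Finset.sum_range_succ, Nat.add_right_comm, ih, ← Nat.add_assoc,
      Nat.choose_succ_succ' (d + k) k]

lemma lemB (d m k : ℕ) :
    (k + m + 1).choose k * (d + k + 1).choose (k + m + 2)
      = ∑ i ∈ Finset.range (k + 1),
          ((m + i).choose i * (d + i).choose (m + 1 + i)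
            + (m + 1 + i).choose i * (d + i).choose (m + 2 + i)) := by
  induction k with
  | zero =>
    simpa [show m + 1 + 1 = m + 2 by ring] using Nat.choose_succ_succ' d (m + 1)
  | succ k ih =>
    rw [Finset.sum_range_succ, ← ih]
    have p1 : (d + (k + 1) + 1).choose (k + 1 + m + 2)
        = (d + k + 1).choose (k + m + 2) + (d + k + 1).choose (k + m + 3) := by
      simpa [show d + (k+1) + 1 = d + k + 1 + 1 by ring, show k + 1 + m + 2 = k + m + 2 + 1 by ring,
        show k + m + 3 = k + m + 2 + 1 by ring] using Nat.choose_succ_succ' (d + k + 1) (k + m + 2)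
    have p2 : (k + 1 + m + 1).choose (k + 1)
        = (k + m + 1).choose k + (k + m + 1).choose (k + 1) := by
      simpa [show k + 1 + m + 1 = k + m + 1 + 1 by ring] using Nat.choose_succ_succ' (k + m + 1) k
    have p3 : (m + 1 + (k + 1)).choose (k + 1)
        = (k + m + 1).choose k + (k + m + 1).choose (k + 1) := by
      simpa [show m + 1 + (k + 1) = k + m + 1 + 1 by ring] using Nat.choose_succ_succ' (k + m + 1) k
    rw [p1, p2, p3, show m + (k + 1) = k + m + 1 by ring, show d + (k + 1) = d + k + 1 by ring,
      show m + 1 + (k + 1) = k + m + 2 by ring, show m + 2 + (k + 1) = k + m + 3 by ring]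
    ring

lemma lemC (K n : ℕ) : ∀ M : ℕ,
    ∑ j ∈ Finset.range (M + 1), (-1 : ℝ) ^ j * ((K + j).choose K) * (n.choose (K + 1 + j))
      = (if K + 1 ≤ n then 1 else 0)
        + (-1 : ℝ) ^ M *
          ∑ i ∈ Finset.range (K + 1),
            (((M + i).choose i * (n - (K + 1) + i).choose (M + 1 + i) : ℕ) : ℝ) := by
  intro M
  induction M with
  | zero =>
    simp only [Finset.sum_range_one, pow_zero, one_mul, Nat.choose_self, Nat.cast_one,
      Nat.zero_add, Nat.add_zero, Nat.choose_zero_right]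
    by_cases h : K + 1 ≤ n
    · rw [if_pos h]
      have hNat : ∑ i ∈ Finset.range (K + 1), (1 * (n - (K + 1) + i).choose (1 + i)) + 1
          = n.choose (K + 1) := by
        simp only [one_mul, show ∀ i : ℕ, 1 + i = i + 1 from fun i => Nat.add_comm 1 i]
        have := lemA (n - (K + 1)) (K + 1)
        rwa [show n - (K + 1) + (K + 1) = n by omega] at this
      have := congrArg (Nat.cast (R := ℝ)) hNat
      push_cast at this ⊢
      simp only [one_mul] at this
      linarith [this]
    · rw [if_neg h]
      have hNat : ∑ i ∈ Finset.range (K + 1), ((i.choose i) * (n - (K + 1) + i).choose (1 + i)) + 1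
          = 1 := by
        rw [Nat.sub_eq_zero_of_le (by omega)]
        simp only [Nat.choose_self, one_mul, Nat.zero_add,
          show ∀ i : ℕ, 1 + i = i + 1 from fun i => Nat.add_comm 1 i]
        have := lemA 0 (K + 1)
        simp only [Nat.zero_add, Nat.choose_self] at this
        omega
      have hc : n.choose (K + 1) = 0 := Nat.choose_eq_zero_of_lt (by omega)
      have := congrArg (Nat.cast (R := ℝ)) hNat
      simp only [Nat.choose_self, Nat.cast_one, one_mul] at this
      push_cast at this ⊢
      rw [hc]
      push_cast
      linarith [this]
  | succ M ih =>
    rw [Finset.sum_range_succ, ih]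
    have key : ((K + M + 1).choose K * n.choose (K + M + 2) : ℕ)
        = ∑ i ∈ Finset.range (K + 1),
            ((M + i).choose i * (n - (K + 1) + i).choose (M + 1 + i)
              + (M + 1 + i).choose i * (n - (K + 1) + i).choose (M + 2 + i)) := by
      by_cases h : K + 1 ≤ n
      · rw [show n.choose (K + M + 2) = (n - (K + 1) + K + 1).choose (K + M + 2) by
          congr 1; omega]
        exact lemB (n - (K + 1)) M K
      · rw [Nat.sub_eq_zero_of_le (by omega),
          Nat.choose_eq_zero_of_lt (show n < K + M + 2 by omega), Nat.mul_zero]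
        refine (Finset.sum_eq_zero fun i _ => ?_).symm
        have h1 : ((0 : ℕ) + i).choose (M + 1 + i) = 0 := Nat.choose_eq_zero_of_lt (by omega)
        have h2 : ((0 : ℕ) + i).choose (M + 2 + i) = 0 := Nat.choose_eq_zero_of_lt (by omega)
        rw [h1, h2, Nat.mul_zero, Nat.mul_zero]
        rfl
    have keyR : ((K + M + 1).choose K : ℝ) * (n.choose (K + M + 2) : ℝ)
        = (∑ i ∈ Finset.range (K + 1),
            (((M + i).choose i * (n - (K + 1) + i).choose (M + 1 + i) : ℕ) : ℝ))
          + ∑ i ∈ Finset.range (K + 1),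
            (((M + 1 + i).choose i * (n - (K + 1) + i).choose (M + 2 + i) : ℕ) : ℝ) := by
      rw [← Finset.sum_add_distrib]
      exact_mod_cast congrArg (Nat.cast (R := ℝ)) key
    simp only [show K + 1 + (M + 1) = K + M + 2 by ring, show K + (M + 1) = K + M + 1 by ring,
      show ∀ i : ℕ, M + 1 + 1 + i = M + 2 + i from fun i => by omega, pow_succ]
    linear_combination (-(-1 : ℝ) ^ M) * keyR

lemma pt_low (K dd n : ℕ) :
    ∑ j ∈ Finset.range (2 * dd + 2), (-1 : ℝ) ^ j * ((K + j).choose K) * (n.choose (K + 1 + j))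
      ≤ (if K + 1 ≤ n then 1 else 0) := by
  have h := lemC K n (2 * dd + 1)
  rw [show 2 * dd + 1 + 1 = 2 * dd + 2 by ring] at h
  rw [h, Odd.neg_one_pow ⟨dd, by ring⟩]
  have hS : (0 : ℝ) ≤ ∑ i ∈ Finset.range (K + 1),
      (((2 * dd + 1 + i).choose i * (n - (K + 1) + i).choose (2 * dd + 1 + 1 + i) : ℕ) : ℝ) :=
    Finset.sum_nonneg fun i _ => Nat.cast_nonneg _
  linarith

lemma pt_up (K r n : ℕ) :
    (if K + 1 ≤ n then (1 : ℝ) else 0)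
      ≤ ∑ j ∈ Finset.range (2 * r + 1), (-1 : ℝ) ^ j * ((K + j).choose K) * (n.choose (K + 1 + j)) := by
  have h := lemC K n (2 * r)
  rw [show 2 * r + 1 = 2 * r + 1 by ring] at h
  rw [h, Even.neg_one_pow ⟨r, by ring⟩]
  have hS : (0 : ℝ) ≤ ∑ i ∈ Finset.range (K + 1),
      (((2 * r + i).choose i * (n - (K + 1) + i).choose (2 * r + 1 + i) : ℕ) : ℝ) :=
    Finset.sum_nonneg fun i _ => Nat.cast_nonneg _
  linarith

lemma nat_choose_bound {j l : ℕ} (hj : j ≤ l) (n : ℕ) :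
    n.choose j ≤ l.choose j + l.choose j * n.choose l := by
  rcases le_or_gt n l with h | h
  · exact le_trans (Nat.choose_le_choose j h) (Nat.le_add_right _ _)
  · have h1 : n.choose l * l.choose j = n.choose j * (n - j).choose (l - j) :=
      Nat.choose_mul hj
    have h2 : 0 < (n - j).choose (l - j) := Nat.choose_pos (by omega)
    have h3 : n.choose j ≤ n.choose j * (n - j).choose (l - j) :=
      Nat.le_mul_of_pos_right _ h2
    calc n.choose j ≤ n.choose l * l.choose j := by rw [h1]; exact h3
      _ = l.choose j * n.choose l := Nat.mul_comm _ _
      _ ≤ l.choose j + l.choose j * n.choose l := Nat.le_add_left _ _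

end Aux

/-- Bonferroni-type inequalities for the tail probability `Pr(X ≥ k)` in terms of
binomial moments. -/
theorem stmt12 {Ω : Type*} [MeasurableSpace Ω] (μ : Measure Ω) [IsProbabilityMeasure μ]
    (X : Ω → ℕ) (hX : Measurable X) (l : ℕ) (hfin : binomMoment μ X l ≠ ∞)
    (k : ℕ) (hk : 1 ≤ k) :
    (∀ d : ℕ, 2 * d + k + 1 ≤ l →
      ∑ j ∈ Finset.range (2 * d + 2),
          (-1 : ℝ) ^ j * (Nat.choose (j + k - 1) (k - 1)) * (binomMoment μ X (j + k)).toReal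
        ≤ (μ {ω | k ≤ X ω}).toReal) ∧
    (∀ r : ℕ, 2 * r + k ≤ l →
      (μ {ω | k ≤ X ω}).toReal ≤
        ∑ j ∈ Finset.range (2 * r + 1),
          (-1 : ℝ) ^ j * (Nat.choose (j + k - 1) (k - 1)) *
            (binomMoment μ X (j + k)).toReal) := by
  obtain ⟨K, rfl⟩ : ∃ K, k = K + 1 := ⟨k - 1, by omega⟩
  have hs : MeasurableSet {ω | K + 1 ≤ X ω} := hX (MeasurableSet.of_discrete)
  have hmeas : ∀ j, Measurable fun ω => ((X ω).choose j : ℝ) :=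
    fun j => (Measurable.of_discrete (f := fun n : ℕ => ((n.choose j : ℝ)))).comp hX
  have hintl : Integrable (fun ω => ((X ω).choose l : ℝ)) μ := by
    refine ⟨(hmeas l).aestronglyMeasurable, ?_⟩
    rw [hasFiniteIntegral_def]
    have he : (fun ω => ‖((X ω).choose l : ℝ)‖ₑ) =
        fun ω => (((X ω).choose l : ℕ) : ℝ≥0∞) := by
      funext ω; simp
    rw [he]
    exact lt_top_iff_ne_top.mpr hfin
  have hint : ∀ j, j ≤ l → Integrable (fun ω => ((X ω).choose j : ℝ)) μ := by
    intro j hj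
    refine Integrable.mono'
      ((integrable_const ((l.choose j : ℝ))).add (hintl.const_mul (l.choose j : ℝ)))
      (hmeas j).aestronglyMeasurable ?_
    filter_upwards with ω
    simp only [Pi.add_apply, Real.norm_natCast]
    exact_mod_cast nat_choose_bound hj (X ω)
  have hval : ∀ j, (binomMoment μ X j).toReal = ∫ ω, ((X ω).choose j : ℝ) ∂μ := by
    intro j
    rw [integral_eq_lintegral_of_nonneg_ae (Filter.Eventually.of_forall fun ω => by positivity)
      (hmeas j).aestronglyMeasurable]
    congr 1
    refine lintegral_congr fun ω => ?_
    rw [ENNReal.ofReal_natCast]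
  have main : ∀ m : ℕ, (∀ j ∈ Finset.range m, j + (K + 1) ≤ l) →
      ∑ j ∈ Finset.range m,
          (-1 : ℝ) ^ j * (Nat.choose (j + (K + 1) - 1) (K + 1 - 1)) *
            (binomMoment μ X (j + (K + 1))).toReal
        = ∫ ω, ∑ j ∈ Finset.range m,
            (-1 : ℝ) ^ j * ((K + j).choose K : ℝ) * ((X ω).choose (K + 1 + j) : ℝ) ∂μ := by
    intro m hm
    rw [integral_finset_sum _ fun j hj =>
      ((hint (K + 1 + j) (by have := hm j hj; omega)).const_mul ((-1 : ℝ) ^ j * ((K + j).choose K : ℝ)))]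
    refine Finset.sum_congr rfl fun j hj => ?_
    rw [show j + (K + 1) - 1 = K + j by omega, show K + 1 - 1 = K by omega, hval,
      show j + (K + 1) = K + 1 + j by ring, ← integral_const_mul]
  have hIsum : ∀ m : ℕ, (∀ j ∈ Finset.range m, j + (K + 1) ≤ l) →
      Integrable (fun ω => ∑ j ∈ Finset.range m,
        (-1 : ℝ) ^ j * ((K + j).choose K : ℝ) * ((X ω).choose (K + 1 + j) : ℝ)) μ :=
    fun m hm => integrable_finset_sum _ fun j hj =>
      ((hint (K + 1 + j) (by have := hm j hj; omega)).const_mul _)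
  have hIind : Integrable ((fun ω => Set.indicator {ω | K + 1 ≤ X ω} (fun _ => (1 : ℝ)) ω)) μ :=
    (integrable_const (1 : ℝ)).indicator hs
  have hind : (μ {ω | K + 1 ≤ X ω}).toReal
      = ∫ ω, Set.indicator {ω | K + 1 ≤ X ω} (fun _ => (1 : ℝ)) ω ∂μ :=
    (integral_indicator_one hs).symm
  constructor
  · intro dd hdd
    rw [main (2 * dd + 2) (fun j hj => by simp only [Finset.mem_range] at hj; omega), hind]
    refine integral_mono (hIsum _ (fun j hj => by simp only [Finset.mem_range] at hj; omega))
      hIind fun ω => ?_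
    have h := pt_low K dd (X ω)
    simpa [Set.indicator_apply, Set.mem_setOf_eq] using h
  · intro r hr
    rw [main (2 * r + 1) (fun j hj => by simp only [Finset.mem_range] at hj; omega), hind]
    refine integral_mono hIind
      (hIsum _ (fun j hj => by simp only [Finset.mem_range] at hj; omega)) fun ω => ?_
    have h := pt_up K r (X ω)
    simpa [Set.indicator_apply, Set.mem_setOf_eq] using h
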